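/- Let T > 0, M, M₁ > 0, and set M₂ = (1 + 3M₁²) exp(3Tκ₂(T + 2M + 1)) and M₃ = 2(T + 2M + 1)κ₂M₂. Then every x ∈ C([-τ,T],ℝ^d) with ‖x₀‖ ≤ M₁ and I_T(x) ≤ M satisfies 1 + ‖x‖²_{[-τ,T]} ≤ M₂ and |x(t) − x(s)|² ≤ M₃|t − s| for all 0 ≤ s < t ≤ T; in particular x is uniformly bounded and Hölder continuous with exponent 1/2 on [0,T], with constants depending only on M₁, κ₂, M, T. -/

import Mathlib

open MeasureTheory Set Metric
open scoped ENNReal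

noncomputable section

/-- `ℝ^d`. -/
abbrev Vec (d : ℕ) := EuclideanSpace ℝ (Fin d)

/-- The state space `𝐂 = C([-τ,0],ℝ^d)`. -/
abbrev Hist (τ : ℝ) (d : ℕ) := C(Icc (-τ) (0:ℝ), Vec d)

/-- The path space `C([-τ,T],ℝ^d)`. -/
abbrev Traj (τ T : ℝ) (d : ℕ) := C(Icc (-τ) T, Vec d)

/-- Matrix acting on a vector. -/
def matVec {d m : ℕ} (M : Matrix (Fin d) (Fin m) ℝ) (v : Vec m) : Vec d :=
  WithLp.toLp 2 (fun i => ∑ j, M i j * v j)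

/-- Squared Frobenius norm of a matrix. -/
def frobSq {d m : ℕ} (M : Matrix (Fin d) (Fin m) ℝ) : ℝ := ∑ i, ∑ j, (M i j) ^ 2

/-- Frobenius norm of a matrix. -/
def frobNorm {d m : ℕ} (M : Matrix (Fin d) (Fin m) ℝ) : ℝ := Real.sqrt (frobSq M)

/-- Evaluation of a path at a time `t ∈ [-τ,T]` (clamped). -/
def ev {d : ℕ} {τ T : ℝ} (h : -τ ≤ T) (x : Traj τ T d) (t : ℝ) : Vec d :=
  x (projIcc (-τ) T h t)

/-- The history segment `x_t ∈ 𝐂` of a path `x ∈ C([-τ,T],ℝ^d)`, for `t ∈ [0,T]`. -/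
def seg {d : ℕ} {τ T : ℝ} (h : -τ ≤ T) (x : Traj τ T d) (t : ℝ) : Hist τ d :=
  ⟨fun s => x (projIcc (-τ) T h (t + s.1)),
    x.continuous.comp <| continuous_projIcc.comp <| continuous_const.add continuous_subtype_val⟩

/-- The uniform Lipschitz assumption on the coefficients:
`|b(φ)−b(ψ)|² + |σ(φ)−σ(ψ)|² ≤ κ₁ ‖φ−ψ‖²`. -/
def LipCoeff {d m : ℕ} {τ : ℝ} (b : Hist τ d → Vec d)
    (σ' : Hist τ d → Matrix (Fin d) (Fin m) ℝ) (κ₁ : ℝ) : Prop :=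
  ∀ φ ψ : Hist τ d, ‖b φ - b ψ‖ ^ 2 + frobSq (σ' φ - σ' ψ) ≤ κ₁ * ‖φ - ψ‖ ^ 2

/-- The linear growth bound `|b(φ)|² + |σ(φ)|² ≤ κ₂ (1 + ‖φ‖²)`. -/
def GrowthCoeff {d m : ℕ} {τ : ℝ} (b : Hist τ d → Vec d)
    (σ' : Hist τ d → Matrix (Fin d) (Fin m) ℝ) (κ₂ : ℝ) : Prop :=
  ∀ φ : Hist τ d, ‖b φ‖ ^ 2 + frobSq (σ' φ) ≤ κ₂ * (1 + ‖φ‖ ^ 2)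

/-- The set `U_T(x)` of controls `u ∈ L²([0,T],ℝ^m)` satisfying
`x(t) = x(0) + ∫₀ᵗ b(x_s) ds + ∫₀ᵗ σ(x_s) u(s) ds` for `t ∈ [0,T]`. -/
def controls {d m : ℕ} {τ T : ℝ} (h : -τ ≤ T) (b : Hist τ d → Vec d)
    (σ' : Hist τ d → Matrix (Fin d) (Fin m) ℝ) (x : Traj τ T d) : Set (ℝ → Vec m) :=
  {u | MemLp u 2 (volume.restrict (Icc 0 T)) ∧
    ∀ t ∈ Icc (0:ℝ) T,
      ev h x t = ev h x 0 + (∫ s in (0:ℝ)..t, b (seg h x s)) +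
        ∫ s in (0:ℝ)..t, matVec (σ' (seg h x s)) (u s)}

/-- The rate function `I_T(x) = inf_{u ∈ U_T(x)} ½∫₀ᵀ |u(s)|² ds` (with value `∞` if
`U_T(x) = ∅`). -/
def rate {d m : ℕ} {τ T : ℝ} (h : -τ ≤ T) (b : Hist τ d → Vec d)
    (σ' : Hist τ d → Matrix (Fin d) (Fin m) ℝ) (x : Traj τ T d) : ℝ≥0∞ :=
  ⨅ (u : ℝ → Vec m) (_ : u ∈ controls h b σ' x),
    ENNReal.ofReal ((1/2) * ∫ s in (0:ℝ)..T, ‖u s‖ ^ 2)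

open Classical in
/-- The rate function `I_T^φ(x)`, which is `I_T(x)` if `x₀ = φ` and `∞` otherwise. -/
def rateAt {d m : ℕ} {τ T : ℝ} (h : -τ ≤ T) (b : Hist τ d → Vec d)
    (σ' : Hist τ d → Matrix (Fin d) (Fin m) ℝ) (φ : Hist τ d) (x : Traj τ T d) : ℝ≥0∞ :=
  if seg h x 0 = φ then rate h b σ' x else ⊤

/-- The supremum norm `‖x‖_{[-τ,t]} = sup_{s ∈ [-τ,t]} |x(s)|` of a path. -/
def supNormOn {d : ℕ} {τ T : ℝ} (h : -τ ≤ T) (x : Traj τ T d) (t : ℝ) : ℝ :=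
  sSup ((fun s => ‖ev h x s‖) '' Icc (-τ) t)

set_option maxHeartbeats 1600000 in
lemma frobSq_nonneg' {d m : ℕ} (A : Matrix (Fin d) (Fin m) ℝ) : 0 ≤ frobSq A :=
  Finset.sum_nonneg fun _ _ => Finset.sum_nonneg fun _ _ => sq_nonneg _

lemma frobNorm_sq' {d m : ℕ} (A : Matrix (Fin d) (Fin m) ℝ) : frobNorm A ^ 2 = frobSq A :=
  Real.sq_sqrt (frobSq_nonneg' A)

lemma frobNorm_nonneg' {d m : ℕ} (A : Matrix (Fin d) (Fin m) ℝ) : 0 ≤ frobNorm A :=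
  Real.sqrt_nonneg _

lemma norm_matVec_le' {d m : ℕ} (A : Matrix (Fin d) (Fin m) ℝ) (v : Vec m) :
    ‖matVec A v‖ ≤ frobNorm A * ‖v‖ := by
  have hv : ‖v‖ ^ 2 = ∑ j, (v j) ^ 2 := by
    rw [EuclideanSpace.norm_eq, Real.sq_sqrt (Finset.sum_nonneg fun _ _ => sq_nonneg _)]
    simp [Real.norm_eq_abs, sq_abs]
  have h1 : ‖matVec A v‖ ^ 2 ≤ frobSq A * ‖v‖ ^ 2 := by
    have h2 : ‖matVec A v‖ ^ 2 = ∑ i, (∑ j, A i j * v j) ^ 2 := by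
      rw [EuclideanSpace.norm_eq, Real.sq_sqrt (Finset.sum_nonneg fun _ _ => sq_nonneg _)]
      simp [matVec, Real.norm_eq_abs, sq_abs]
    rw [h2, hv, frobSq, Finset.sum_mul]
    exact Finset.sum_le_sum fun i _ => Finset.sum_mul_sq_le_sq_mul_sq _ _ _
  calc ‖matVec A v‖ = Real.sqrt (‖matVec A v‖ ^ 2) := (Real.sqrt_sq (norm_nonneg _)).symm
    _ ≤ Real.sqrt (frobSq A * ‖v‖ ^ 2) := Real.sqrt_le_sqrt h1
    _ = frobNorm A * ‖v‖ := by
        rw [Real.sqrt_mul (frobSq_nonneg' A), Real.sqrt_sq (norm_nonneg _)]; rfl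

lemma aesm_vec' {d : ℕ} {μ : Measure ℝ} {f : ℝ → Vec d}
    (hf : ∀ i, AEMeasurable (fun r => f r i) μ) : AEStronglyMeasurable f μ := by
  choose g hg hfg using hf
  refine AEMeasurable.aestronglyMeasurable (⟨fun r => WithLp.toLp 2 (fun i => g i r),
    (PiLp.continuous_toLp _ _).measurable.comp (measurable_pi_iff.mpr hg), ?_⟩)
  filter_upwards [MeasureTheory.ae_all_iff.mpr hfg] with r hr
  ext i; exact hr i

lemma memLp2_of_bound' {F : ℝ → ℝ} {s t : ℝ}
    (hm : AEStronglyMeasurable F (volume.restrict (Ioc s t))) (C : ℝ) (hC : ∀ r, ‖F r‖ ≤ C) :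
    MemLp F 2 (volume.restrict (Ioc s t)) := by
  haveI : IsFiniteMeasure (volume.restrict (Ioc s t)) :=
    ⟨by rw [Measure.restrict_apply_univ]; exact measure_Ioc_lt_top⟩
  exact MemLp.of_bound hm C (Filter.Eventually.of_forall hC)

set_option maxHeartbeats 800000 in
lemma cs_int' {s t : ℝ} (hst : s ≤ t) {F G : ℝ → ℝ}
    (hF0 : ∀ r, 0 ≤ F r) (hG0 : ∀ r, 0 ≤ G r)
    (hF : MemLp F 2 (volume.restrict (Ioc s t))) (hG : MemLp G 2 (volume.restrict (Ioc s t))) :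
    (∫ r in s..t, F r * G r) ^ 2 ≤ (∫ r in s..t, F r ^ 2) * (∫ r in s..t, G r ^ 2) := by
  rw [intervalIntegral.integral_of_le hst, intervalIntegral.integral_of_le hst,
    intervalIntegral.integral_of_le hst]
  have hpq : (2:ℝ).HolderConjugate 2 := Real.HolderConjugate.two_two
  have h2 : ENNReal.ofReal (2:ℝ) = 2 := by norm_num
  have hr2 : ∀ y : ℝ, y ^ (2:ℝ) = y ^ 2 := fun y => by
    rw [show (2:ℝ) = ((2:ℕ):ℝ) by norm_num, Real.rpow_natCast]
  have key := MeasureTheory.integral_mul_le_Lp_mul_Lq_of_nonneg hpq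
    (Filter.Eventually.of_forall hF0) (Filter.Eventually.of_forall hG0)
    (by rw [h2]; exact hF) (by rw [h2]; exact hG)
  simp only [hr2] at key
  have hP : 0 ≤ ∫ r in Ioc s t, F r ^ 2 := integral_nonneg fun r => sq_nonneg _
  have hQ : 0 ≤ ∫ r in Ioc s t, G r ^ 2 := integral_nonneg fun r => sq_nonneg _
  have hI : 0 ≤ ∫ r in Ioc s t, F r * G r :=
    integral_nonneg fun r => mul_nonneg (hF0 r) (hG0 r)
  calc (∫ r in Ioc s t, F r * G r) ^ 2
      ≤ ((∫ r in Ioc s t, F r ^ 2) ^ (1/2:ℝ) * (∫ r in Ioc s t, G r ^ 2) ^ (1/2:ℝ)) ^ 2 :=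
        pow_le_pow_left₀ hI key 2
    _ = (∫ r in Ioc s t, F r ^ 2) * (∫ r in Ioc s t, G r ^ 2) := by
        rw [mul_pow, ← Real.rpow_natCast (_ ^ (1/2:ℝ)) 2, ← Real.rpow_natCast (_ ^ (1/2:ℝ)) 2,
          ← Real.rpow_mul hP, ← Real.rpow_mul hQ]
        norm_num


set_option maxHeartbeats 3200000 in
/-- uniform boundedness and 1/2-Hölder continuity of elements of level sets. -/
theorem stmt_4 {d m : ℕ} (hd : 0 < d) (hm : 0 < m) {τ T : ℝ} (hτ : 0 < τ) (hT : 0 < T)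
    (h : -τ ≤ T)
    (b : Hist τ d → Vec d) (σ' : Hist τ d → Matrix (Fin d) (Fin m) ℝ)
    {κ₁ κ₂ : ℝ} (hκ₁ : 0 < κ₁) (hκ₂ : 0 < κ₂)
    (hlip : LipCoeff b σ' κ₁) (hgrowth : GrowthCoeff b σ' κ₂)
    (M M₁ : ℝ) (hM : 0 < M) (hM₁ : 0 < M₁)
    (M₂ M₃ : ℝ)
    (hM₂ : M₂ = (1 + 3 * M₁ ^ 2) * Real.exp (3 * T * κ₂ * (T + 2 * M + 1)))
    (hM₃ : M₃ = 2 * (T + 2 * M + 1) * κ₂ * M₂)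
    (x : Traj τ T d) (hx0 : ‖seg h x 0‖ ≤ M₁) (hxM : rate h b σ' x ≤ ENNReal.ofReal M) :
    1 + supNormOn h x T ^ 2 ≤ M₂ ∧
      ∀ s t : ℝ, 0 ≤ s → s < t → t ≤ T → ‖ev h x t - ev h x s‖ ^ 2 ≤ M₃ * |t - s| := by
  classical
  have hτ0 : -τ ≤ (0:ℝ) := by linarith
  have hT0 : (0:ℝ) ≤ T := hT.le
  have hevc : Continuous (ev h x) := x.continuous.comp continuous_projIcc
  -- sup norm basics
  have hbdd : ∀ t : ℝ, BddAbove ((fun s => ‖ev h x s‖) '' Icc (-τ) t) := fun t =>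
    ⟨‖x‖, by rintro y ⟨s, -, rfl⟩; exact ContinuousMap.norm_coe_le_norm x _⟩
  have hne : ∀ t : ℝ, -τ ≤ t → ((fun s => ‖ev h x s‖) '' Icc (-τ) t).Nonempty :=
    fun t ht => ⟨_, mem_image_of_mem _ (left_mem_Icc.mpr ht)⟩
  have hsup_ub : ∀ {s t : ℝ}, -τ ≤ s → s ≤ t → ‖ev h x s‖ ≤ supNormOn h x t :=
    fun {s t} hs hst => le_csSup (hbdd t) (mem_image_of_mem _ ⟨hs, hst⟩)
  have hsup_nonneg : ∀ t : ℝ, -τ ≤ t → 0 ≤ supNormOn h x t :=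
    fun t ht => le_trans (norm_nonneg _) (hsup_ub le_rfl ht)
  have hsup_mono : ∀ {s t : ℝ}, -τ ≤ s → s ≤ t → supNormOn h x s ≤ supNormOn h x t :=
    fun {s t} hs hst =>
      csSup_le_csSup (hbdd t) (hne s hs) (image_mono (Icc_subset_Icc le_rfl hst))
  have hsup_le : ∀ {t C : ℝ}, -τ ≤ t → (∀ s ∈ Icc (-τ) t, ‖ev h x s‖ ≤ C) →
      supNormOn h x t ≤ C :=
    fun {t C} ht hC => csSup_le (hne t ht) (by rintro y ⟨s, hs, rfl⟩; exact hC s hs)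
  have hseg_le : ∀ t : ℝ, 0 ≤ t → ‖seg h x t‖ ≤ supNormOn h x t := by
    intro t ht
    rw [ContinuousMap.norm_le _ (hsup_nonneg t (by linarith))]
    intro s
    have h1 : (seg h x t) s = ev h x (t + s.1) := rfl
    rw [h1]
    exact hsup_ub (by have := s.2.1; linarith) (by have := s.2.2; linarith)
  have hseg_glob : ∀ t : ℝ, ‖seg h x t‖ ≤ ‖x‖ := fun t => by
    rw [ContinuousMap.norm_le _ (norm_nonneg x)]
    intro s; exact ContinuousMap.norm_coe_le_norm x _
  -- the function f
  set f : ℝ → ℝ := fun t => 1 + supNormOn h x t ^ 2 with hf_def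
  have hf0 : ∀ r : ℝ, 0 ≤ f r := fun r => by
    simp only [hf_def]; nlinarith [sq_nonneg (supNormOn h x r)]
  have hf1 : ∀ r : ℝ, 1 ≤ f r := fun r => by
    simp only [hf_def]; nlinarith [sq_nonneg (supNormOn h x r)]
  have hf_mono : ∀ {s t : ℝ}, 0 ≤ s → s ≤ t → f s ≤ f t := by
    intro s t hs hst
    simp only [hf_def]
    have h1 := hsup_mono (show -τ ≤ s by linarith) hst
    have h2 := hsup_nonneg s (by linarith)
    nlinarith
  -- continuity of f on Ici 0
  have hN : Continuous fun p : ℝ × Icc (0:ℝ) 1 => ‖ev h x (-τ + (p.1 + τ) * p.2.1)‖ := by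
    exact (hevc.comp (continuous_const.add ((continuous_fst.add continuous_const).mul
      (continuous_subtype_val.comp continuous_snd)))).norm
  let N : C(ℝ × Icc (0:ℝ) 1, ℝ) := ⟨_, hN⟩
  have hNval : ∀ (t' : ℝ) (r : Icc (0:ℝ) 1),
      (N.curry t') r = ‖ev h x (-τ + (t' + τ) * r.1)‖ := fun _ _ => rfl
  have hkey : ∀ t : ℝ, 0 ≤ t → supNormOn h x t = ‖N.curry t‖ := by
    intro t ht
    have htτ : (0:ℝ) < t + τ := by linarith
    have himg : Icc (-τ) t = (fun r : ℝ => -τ + (t + τ) * r) '' Icc (0:ℝ) 1 := by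
      ext y
      simp only [mem_image, mem_Icc]
      constructor
      · intro hy
        refine ⟨(y + τ) / (t + τ), ⟨div_nonneg (by linarith [hy.1]) htτ.le,
          (div_le_one htτ).mpr (by linarith [hy.2])⟩, ?_⟩
        rw [mul_comm, div_mul_cancel₀ _ htτ.ne']; ring
      · rintro ⟨r, hr, rfl⟩
        constructor
        · nlinarith [hr.1, hr.2]
        · nlinarith [hr.1, hr.2]
    have h2 : ∀ r : Icc (0:ℝ) 1, ‖(N.curry t) r‖ = ‖ev h x (-τ + (t + τ) * r.1)‖ := by
      intro r
      rw [hNval t r]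
      exact Real.norm_of_nonneg (norm_nonneg _)
    rw [supNormOn, himg, Set.image_image, Set.image_eq_range]
    calc sSup (range fun r : Icc (0:ℝ) 1 => ‖ev h x (-τ + (t + τ) * r.1)‖)
        = ⨆ r : Icc (0:ℝ) 1, ‖ev h x (-τ + (t + τ) * r.1)‖ := rfl
      _ = ⨆ r : Icc (0:ℝ) 1, ‖(N.curry t) r‖ := iSup_congr fun r => (h2 r).symm
      _ = ‖N.curry t‖ := (ContinuousMap.norm_eq_iSup_norm _).symm
  have hf_contOn : ContinuousOn f (Ici (0:ℝ)) := by
    have hc : Continuous fun t : ℝ => 1 + ‖N.curry t‖ ^ 2 :=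
      continuous_const.add ((N.curry.continuous.norm).pow 2)
    refine hc.continuousOn.congr ?_
    intro t ht
    show f t = 1 + ‖N.curry t‖ ^ 2
    simp only [hf_def]
    rw [hkey t ht]
  -- continuity of coefficients along the path
  have hsegc : Continuous (seg h x) := by
    let F : C(ℝ × Icc (-τ) (0:ℝ), Vec d) :=
      ⟨fun p => x (projIcc (-τ) T h (p.1 + p.2.1)),
        x.continuous.comp (continuous_projIcc.comp
          (continuous_fst.add (continuous_subtype_val.comp continuous_snd)))⟩
    have he : seg h x = ⇑F.curry := funext fun t => ContinuousMap.ext fun s => rfl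
    rw [he]; exact F.curry.continuous
  have hbc : Continuous fun r => b (seg h x r) := by
    have hl : LipschitzWith ⟨Real.sqrt κ₁, Real.sqrt_nonneg _⟩ b := by
      apply LipschitzWith.of_dist_le_mul
      intro φ ψ
      rw [dist_eq_norm, dist_eq_norm]
      have h1 := hlip φ ψ
      have h2 := frobSq_nonneg' (σ' φ - σ' ψ)
      have h3 : ‖b φ - b ψ‖ ^ 2 ≤ κ₁ * ‖φ - ψ‖ ^ 2 := by linarith
      calc ‖b φ - b ψ‖ = Real.sqrt (‖b φ - b ψ‖ ^ 2) := (Real.sqrt_sq (norm_nonneg _)).symm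
        _ ≤ Real.sqrt (κ₁ * ‖φ - ψ‖ ^ 2) := Real.sqrt_le_sqrt h3
        _ = Real.sqrt κ₁ * ‖φ - ψ‖ := by
            rw [Real.sqrt_mul hκ₁.le, Real.sqrt_sq (norm_nonneg _)]
    exact hl.continuous.comp hsegc
  have hσc : ∀ i j, Continuous fun r => σ' (seg h x r) i j := by
    intro i j
    have hl : LipschitzWith ⟨Real.sqrt κ₁, Real.sqrt_nonneg _⟩ (fun φ => σ' φ i j) := by
      apply LipschitzWith.of_dist_le_mul
      intro φ ψ
      rw [Real.dist_eq]
      have h1 := hlip φ ψ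
      have hentry : (σ' φ i j - σ' ψ i j) ^ 2 ≤ frobSq (σ' φ - σ' ψ) := by
        have hsub : (σ' φ - σ' ψ) i j = σ' φ i j - σ' ψ i j := rfl
        calc (σ' φ i j - σ' ψ i j) ^ 2 = ((σ' φ - σ' ψ) i j) ^ 2 := by rw [hsub]
          _ ≤ ∑ j', ((σ' φ - σ' ψ) i j') ^ 2 :=
              Finset.single_le_sum (f := fun j' => ((σ' φ - σ' ψ) i j') ^ 2)
                (fun j' _ => sq_nonneg _) (Finset.mem_univ j)
          _ ≤ frobSq (σ' φ - σ' ψ) :=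
              Finset.single_le_sum (f := fun i' => ∑ j', ((σ' φ - σ' ψ) i' j') ^ 2)
                (fun i' _ => Finset.sum_nonneg fun _ _ => sq_nonneg _) (Finset.mem_univ i)
      have h3 : (σ' φ i j - σ' ψ i j) ^ 2 ≤ κ₁ * ‖φ - ψ‖ ^ 2 := by
        nlinarith [sq_nonneg ‖b φ - b ψ‖]
      calc |σ' φ i j - σ' ψ i j|
          = Real.sqrt ((σ' φ i j - σ' ψ i j) ^ 2) := (Real.sqrt_sq_eq_abs _).symm
        _ ≤ Real.sqrt (κ₁ * ‖φ - ψ‖ ^ 2) := Real.sqrt_le_sqrt h3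
        _ = Real.sqrt κ₁ * ‖φ - ψ‖ := by
            rw [Real.sqrt_mul hκ₁.le, Real.sqrt_sq (norm_nonneg _)]
        _ = Real.sqrt κ₁ * dist φ ψ := by rw [dist_eq_norm]
    exact hl.continuous.comp hsegc
  have hfsqc : Continuous fun r => frobSq (σ' (seg h x r)) := by
    unfold frobSq
    exact continuous_finset_sum _ fun i _ => continuous_finset_sum _ fun j _ => (hσc i j).pow 2
  have hφc : Continuous fun r => frobNorm (σ' (seg h x r)) := Real.continuous_sqrt.comp hfsqc
  -- global bounds
  set Kg : ℝ := Real.sqrt (κ₂ * (1 + ‖x‖ ^ 2)) with hKg_def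
  have hgrow_glob : ∀ r : ℝ, ‖b (seg h x r)‖ ≤ Kg ∧ frobNorm (σ' (seg h x r)) ≤ Kg := by
    intro r
    have h1 := hgrowth (seg h x r)
    have h2 : 1 + ‖seg h x r‖ ^ 2 ≤ 1 + ‖x‖ ^ 2 := by
      nlinarith [hseg_glob r, norm_nonneg (seg h x r)]
    have h3 : κ₂ * (1 + ‖seg h x r‖ ^ 2) ≤ κ₂ * (1 + ‖x‖ ^ 2) := by nlinarith
    have h4 := frobSq_nonneg' (σ' (seg h x r))
    constructor
    · calc ‖b (seg h x r)‖ = Real.sqrt (‖b (seg h x r)‖ ^ 2) :=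
          (Real.sqrt_sq (norm_nonneg _)).symm
        _ ≤ Kg := Real.sqrt_le_sqrt (by linarith)
    · calc frobNorm (σ' (seg h x r)) = Real.sqrt (frobSq (σ' (seg h x r))) := rfl
        _ ≤ Kg := Real.sqrt_le_sqrt (by nlinarith [sq_nonneg ‖b (seg h x r)‖])
  -- pointwise growth bounds against f
  have hgb : ∀ r : ℝ, 0 ≤ r →
      ‖b (seg h x r)‖ ^ 2 ≤ κ₂ * f r ∧ frobSq (σ' (seg h x r)) ≤ κ₂ * f r := by
    intro r hr
    have h1 := hgrowth (seg h x r)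
    have h2 : 1 + ‖seg h x r‖ ^ 2 ≤ f r := by
      have ha := hseg_le r hr
      have hb' := hsup_nonneg r (by linarith)
      simp only [hf_def]
      nlinarith [norm_nonneg (seg h x r)]
    have h3 : κ₂ * (1 + ‖seg h x r‖ ^ 2) ≤ κ₂ * f r := by nlinarith
    have h4 := frobSq_nonneg' (σ' (seg h x r))
    exact ⟨by nlinarith [sq_nonneg ‖b (seg h x r)‖], by nlinarith [sq_nonneg ‖b (seg h x r)‖]⟩
  -- extract a control
  obtain ⟨u, hmem, hulen⟩ : ∃ u, u ∈ controls h b σ' x ∧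
      (1/2 : ℝ) * ∫ r in (0:ℝ)..T, ‖u r‖ ^ 2 < M + 1/2 := by
    have h1 : rate h b σ' x < ENNReal.ofReal (M + 1/2) :=
      lt_of_le_of_lt hxM ((ENNReal.ofReal_lt_ofReal_iff (by linarith)).mpr (by linarith))
    unfold rate at h1
    obtain ⟨u, hu⟩ := iInf_lt_iff.mp h1
    by_cases hc : u ∈ controls h b σ' x
    · refine ⟨u, hc, ?_⟩
      rw [iInf_pos hc] at hu
      exact (ENNReal.ofReal_lt_ofReal_iff (by linarith)).mp hu
    · rw [iInf_neg hc] at hu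
      exact absurd hu (by simp)
  obtain ⟨huL2, hueq⟩ := hmem
  have hU : ∫ r in (0:ℝ)..T, ‖u r‖ ^ 2 ≤ 2 * M + 1 := by linarith
  -- integrability
  haveI : IsFiniteMeasure (volume.restrict (Icc (0:ℝ) T)) :=
    ⟨by rw [Measure.restrict_apply_univ]; exact measure_Icc_lt_top⟩
  have hu_sm : AEStronglyMeasurable u (volume.restrict (Icc 0 T)) := huL2.aestronglyMeasurable
  have hu2_int : IntegrableOn (fun r => ‖u r‖ ^ 2) (Icc 0 T) := by
    have h1 := huL2.integrable_norm_rpow two_ne_zero ENNReal.ofNat_ne_top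
    have h2 : (fun r => ‖u r‖ ^ (2:ℝ≥0∞).toReal) = fun r => ‖u r‖ ^ 2 := by
      funext r
      rw [show ((2:ℝ≥0∞).toReal) = ((2:ℕ):ℝ) by simp, Real.rpow_natCast]
    rwa [h2] at h1
  have hu1_int : IntegrableOn (fun r => ‖u r‖) (Icc 0 T) :=
    memLp_one_iff_integrable.mp ((huL2.norm).mono_exponent (by norm_num))
  have hmv_sm : AEStronglyMeasurable (fun r => matVec (σ' (seg h x r)) (u r))
      (volume.restrict (Icc 0 T)) := by
    apply aesm_vec'
    intro i
    have hco : (fun r => matVec (σ' (seg h x r)) (u r) i)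
        = fun r => ∑ j, σ' (seg h x r) i j * u r j := rfl
    rw [hco]
    exact Finset.aemeasurable_fun_sum _ fun j _ => (hσc i j).aemeasurable.mul
      (((EuclideanSpace.proj j : Vec m →L[ℝ] ℝ).continuous.comp_aestronglyMeasurable
        hu_sm).aemeasurable)
  have hmv_int : IntegrableOn (fun r => matVec (σ' (seg h x r)) (u r)) (Icc 0 T) := by
    refine Integrable.mono' (hu1_int.const_mul Kg) hmv_sm ?_
    refine Filter.Eventually.of_forall fun r => ?_
    calc ‖matVec (σ' (seg h x r)) (u r)‖ ≤ frobNorm (σ' (seg h x r)) * ‖u r‖ :=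
        norm_matVec_le' _ _
      _ ≤ Kg * ‖u r‖ := mul_le_mul_of_nonneg_right (hgrow_glob r).2 (norm_nonneg _)
  have hφu_int : IntegrableOn (fun r => frobNorm (σ' (seg h x r)) * ‖u r‖) (Icc 0 T) := by
    refine Integrable.mono' (hu1_int.const_mul Kg)
      ((hφc.aestronglyMeasurable).mul hu_sm.norm) ?_
    refine Filter.Eventually.of_forall fun r => ?_
    rw [Real.norm_eq_abs, abs_of_nonneg (mul_nonneg (frobNorm_nonneg' _) (norm_nonneg _))]
    exact mul_le_mul_of_nonneg_right (hgrow_glob r).2 (norm_nonneg _)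
  have hsub : ∀ {s t : ℝ}, 0 ≤ s → s ≤ t → t ≤ T → uIoc s t ⊆ Icc 0 T := by
    intro s t hs hst ht
    rw [uIoc_of_le hst]
    exact subset_trans Ioc_subset_Icc_self (Icc_subset_Icc hs ht)
  have hmv_ii : ∀ {s t : ℝ}, 0 ≤ s → s ≤ t → t ≤ T →
      IntervalIntegrable (fun r => matVec (σ' (seg h x r)) (u r)) volume s t :=
    fun {s t} hs hst ht => intervalIntegrable_iff.mpr (hmv_int.mono_set (hsub hs hst ht))
  have hφu_ii : ∀ {s t : ℝ}, 0 ≤ s → s ≤ t → t ≤ T →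
      IntervalIntegrable (fun r => frobNorm (σ' (seg h x r)) * ‖u r‖) volume s t :=
    fun {s t} hs hst ht => intervalIntegrable_iff.mpr (hφu_int.mono_set (hsub hs hst ht))
  have hu2_ii : ∀ {s t : ℝ}, 0 ≤ s → s ≤ t → t ≤ T →
      IntervalIntegrable (fun r => ‖u r‖ ^ 2) volume s t :=
    fun {s t} hs hst ht => intervalIntegrable_iff.mpr (hu2_int.mono_set (hsub hs hst ht))
  have hb_ii : ∀ s t : ℝ, IntervalIntegrable (fun r => b (seg h x r)) volume s t :=
    fun s t => hbc.intervalIntegrable s t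
  have hbn2_ii : ∀ s t : ℝ, IntervalIntegrable (fun r => ‖b (seg h x r)‖ ^ 2) volume s t :=
    fun s t => ((hbc.norm).pow 2).intervalIntegrable s t
  have hf_ii : ∀ {s t : ℝ}, 0 ≤ s → 0 ≤ t → IntervalIntegrable f volume s t :=
    fun {s t} hs ht =>
      (hf_contOn.mono (fun r hr => le_trans (le_min hs ht) hr.1)).intervalIntegrable
  have hU' : ∀ {s t : ℝ}, 0 ≤ s → s ≤ t → t ≤ T → ∫ r in s..t, ‖u r‖ ^ 2 ≤ 2 * M + 1 := by
    intro s t hs hst ht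
    refine le_trans (intervalIntegral.integral_mono_interval hs hst ht
      (Filter.Eventually.of_forall fun r => sq_nonneg _) (hu2_ii le_rfl hT0 le_rfl)) hU
  -- memLp facts on subintervals
  have hmb : ∀ s t : ℝ, MemLp (fun r => ‖b (seg h x r)‖) 2 (volume.restrict (Ioc s t)) :=
    fun s t => memLp2_of_bound' (hbc.norm.aestronglyMeasurable) Kg (fun r => by
      rw [Real.norm_eq_abs, abs_of_nonneg (norm_nonneg _)]; exact (hgrow_glob r).1)
  have hmφ : ∀ s t : ℝ, MemLp (fun r => frobNorm (σ' (seg h x r))) 2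
      (volume.restrict (Ioc s t)) :=
    fun s t => memLp2_of_bound' (hφc.aestronglyMeasurable) Kg (fun r => by
      rw [Real.norm_eq_abs, abs_of_nonneg (frobNorm_nonneg' _)]; exact (hgrow_glob r).2)
  have hmu : ∀ {s t : ℝ}, 0 ≤ s → t ≤ T →
      MemLp (fun r => ‖u r‖) 2 (volume.restrict (Ioc s t)) :=
    fun {s t} hs ht => (huL2.norm).mono_measure
      (Measure.restrict_mono (subset_trans Ioc_subset_Icc_self (Icc_subset_Icc hs ht)) le_rfl)
  have hone : ∀ s t : ℝ, MemLp (fun _ : ℝ => (1:ℝ)) 2 (volume.restrict (Ioc s t)) := by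
    intro s t
    haveI : IsFiniteMeasure (volume.restrict (Ioc s t)) :=
      ⟨by rw [Measure.restrict_apply_univ]; exact measure_Ioc_lt_top⟩
    exact memLp_const 1
  -- the two integral bounds
  have hB : ∀ {s t : ℝ}, 0 ≤ s → s ≤ t → t ≤ T →
      (∫ r in s..t, ‖b (seg h x r)‖) ^ 2 ≤ (t - s) * (κ₂ * ∫ r in s..t, f r) := by
    intro s t hs hst ht
    have h1 : (∫ r in s..t, ‖b (seg h x r)‖ * 1) ^ 2
        ≤ (∫ r in s..t, ‖b (seg h x r)‖ ^ 2) * (∫ r in s..t, (1:ℝ) ^ 2) :=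
      cs_int' hst (fun r => norm_nonneg _) (fun r => zero_le_one) (hmb s t) (hone s t)
    simp only [mul_one, one_pow] at h1
    have h2 : (∫ r in s..t, (1:ℝ)) = t - s := by simp
    have h3 : (∫ r in s..t, ‖b (seg h x r)‖ ^ 2) ≤ κ₂ * ∫ r in s..t, f r := by
      rw [← intervalIntegral.integral_const_mul]
      exact intervalIntegral.integral_mono_on hst (hbn2_ii s t)
        ((hf_ii hs (le_trans hs hst)).const_mul κ₂) (fun r hr => (hgb r (le_trans hs hr.1)).1)
    rw [h2] at h1
    calc (∫ r in s..t, ‖b (seg h x r)‖) ^ 2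
        ≤ (∫ r in s..t, ‖b (seg h x r)‖ ^ 2) * (t - s) := h1
      _ ≤ (κ₂ * ∫ r in s..t, f r) * (t - s) :=
          mul_le_mul_of_nonneg_right h3 (by linarith)
      _ = (t - s) * (κ₂ * ∫ r in s..t, f r) := mul_comm _ _
  have hS : ∀ {s t : ℝ}, 0 ≤ s → s ≤ t → t ≤ T →
      (∫ r in s..t, frobNorm (σ' (seg h x r)) * ‖u r‖) ^ 2
        ≤ (κ₂ * ∫ r in s..t, f r) * (2 * M + 1) := by
    intro s t hs hst ht
    have h1 := cs_int' hst (fun r => frobNorm_nonneg' _) (fun r => norm_nonneg _)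
      (hmφ s t) (hmu hs ht)
    have h2 : (∫ r in s..t, frobNorm (σ' (seg h x r)) ^ 2)
        = ∫ r in s..t, frobSq (σ' (seg h x r)) :=
      intervalIntegral.integral_congr fun r _ => frobNorm_sq' _
    have h3 : (∫ r in s..t, frobSq (σ' (seg h x r))) ≤ κ₂ * ∫ r in s..t, f r := by
      rw [← intervalIntegral.integral_const_mul]
      exact intervalIntegral.integral_mono_on hst (hfsqc.intervalIntegrable s t)
        ((hf_ii hs (le_trans hs hst)).const_mul κ₂) (fun r hr => (hgb r (le_trans hs hr.1)).2)
    have h4 : 0 ≤ ∫ r in s..t, frobSq (σ' (seg h x r)) :=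
      intervalIntegral.integral_nonneg hst fun r _ => frobSq_nonneg' _
    have h5 : 0 ≤ ∫ r in s..t, ‖u r‖ ^ 2 :=
      intervalIntegral.integral_nonneg hst fun r _ => sq_nonneg _
    have h6 := hU' hs hst ht
    calc (∫ r in s..t, frobNorm (σ' (seg h x r)) * ‖u r‖) ^ 2
        ≤ (∫ r in s..t, frobSq (σ' (seg h x r))) * (∫ r in s..t, ‖u r‖ ^ 2) := by
          rw [← h2]; exact h1
      _ ≤ (κ₂ * ∫ r in s..t, f r) * (2 * M + 1) := mul_le_mul h3 h6 h5 (le_trans h4 h3)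
  -- value at 0
  have hev0 : ‖ev h x 0‖ ≤ M₁ := by
    have h1 : ev h x 0 = (seg h x 0) ⟨0, ⟨hτ0, le_rfl⟩⟩ := by simp [ev, seg]
    rw [h1]
    exact le_trans (ContinuousMap.norm_coe_le_norm _ _) hx0
  -- main estimate
  have est : ∀ r : ℝ, 0 ≤ r → r ≤ T → ‖ev h x r‖ ^ 2
      ≤ 3 * M₁ ^ 2 + (3 * κ₂ * (T + 2 * M + 1)) * ∫ ρ in (0:ℝ)..r, f ρ := by
    intro r hr hrT
    have he := hueq r ⟨hr, hrT⟩
    have hBn : ‖∫ ρ in (0:ℝ)..r, b (seg h x ρ)‖ ≤ ∫ ρ in (0:ℝ)..r, ‖b (seg h x ρ)‖ :=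
      intervalIntegral.norm_integral_le_integral_norm hr
    have hSn : ‖∫ ρ in (0:ℝ)..r, matVec (σ' (seg h x ρ)) (u ρ)‖
        ≤ ∫ ρ in (0:ℝ)..r, frobNorm (σ' (seg h x ρ)) * ‖u ρ‖ :=
      le_trans (intervalIntegral.norm_integral_le_integral_norm hr)
        (intervalIntegral.integral_mono_on hr ((hmv_ii le_rfl hr hrT).norm)
          (hφu_ii le_rfl hr hrT) fun ρ _ => norm_matVec_le' _ _)
    have htri : ‖ev h x r‖ ≤ M₁ + (∫ ρ in (0:ℝ)..r, ‖b (seg h x ρ)‖)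
        + ∫ ρ in (0:ℝ)..r, frobNorm (σ' (seg h x ρ)) * ‖u ρ‖ := by
      calc ‖ev h x r‖ = ‖ev h x 0 + (∫ ρ in (0:ℝ)..r, b (seg h x ρ))
          + ∫ ρ in (0:ℝ)..r, matVec (σ' (seg h x ρ)) (u ρ)‖ := by rw [← he]
        _ ≤ ‖ev h x 0‖ + ‖∫ ρ in (0:ℝ)..r, b (seg h x ρ)‖
            + ‖∫ ρ in (0:ℝ)..r, matVec (σ' (seg h x ρ)) (u ρ)‖ := norm_add₃_le
        _ ≤ _ := add_le_add (add_le_add hev0 hBn) hSn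
    have hBnn : 0 ≤ ∫ ρ in (0:ℝ)..r, ‖b (seg h x ρ)‖ :=
      intervalIntegral.integral_nonneg hr fun ρ _ => norm_nonneg _
    have hSnn : 0 ≤ ∫ ρ in (0:ℝ)..r, frobNorm (σ' (seg h x ρ)) * ‖u ρ‖ :=
      intervalIntegral.integral_nonneg hr fun ρ _ =>
        mul_nonneg (frobNorm_nonneg' _) (norm_nonneg _)
    have hB2 := hB le_rfl hr hrT
    have hS2 := hS le_rfl hr hrT
    have hGnn : 0 ≤ ∫ ρ in (0:ℝ)..r, f ρ :=
      intervalIntegral.integral_nonneg hr fun ρ _ => hf0 ρ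
    have hsq : ‖ev h x r‖ ^ 2 ≤ (M₁ + (∫ ρ in (0:ℝ)..r, ‖b (seg h x ρ)‖)
        + ∫ ρ in (0:ℝ)..r, frobNorm (σ' (seg h x ρ)) * ‖u ρ‖) ^ 2 :=
      pow_le_pow_left₀ (norm_nonneg _) htri 2
    have hprod : 0 ≤ (T - r) * (κ₂ * ∫ ρ in (0:ℝ)..r, f ρ) :=
      mul_nonneg (by linarith) (mul_nonneg hκ₂.le hGnn)
    nlinarith [hsq, hB2, hS2, hprod, hBnn, hSnn, hM₁.le,
      sq_nonneg (M₁ - ∫ ρ in (0:ℝ)..r, ‖b (seg h x ρ)‖),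
      sq_nonneg (M₁ - ∫ ρ in (0:ℝ)..r, frobNorm (σ' (seg h x ρ)) * ‖u ρ‖),
      sq_nonneg ((∫ ρ in (0:ℝ)..r, ‖b (seg h x ρ)‖)
        - ∫ ρ in (0:ℝ)..r, frobNorm (σ' (seg h x ρ)) * ‖u ρ‖)]
  -- f satisfies the integral inequality
  have hfle : ∀ ρ ∈ Icc (0:ℝ) T,
      f ρ ≤ (1 + 3 * M₁ ^ 2) + (3 * κ₂ * (T + 2 * M + 1)) * ∫ r in (0:ℝ)..ρ, f r := by
    intro ρ hρ
    have hGnn : 0 ≤ ∫ r in (0:ℝ)..ρ, f r :=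
      intervalIntegral.integral_nonneg hρ.1 fun r _ => hf0 r
    have hCcnn : (0:ℝ) ≤ 3 * κ₂ * (T + 2 * M + 1) := by nlinarith
    have hR : (0:ℝ) ≤ 3 * M₁ ^ 2 + (3 * κ₂ * (T + 2 * M + 1)) * ∫ r in (0:ℝ)..ρ, f r := by
      nlinarith [sq_nonneg M₁, mul_nonneg hCcnn hGnn]
    have hsupb : supNormOn h x ρ
        ≤ Real.sqrt (3 * M₁ ^ 2 + (3 * κ₂ * (T + 2 * M + 1)) * ∫ r in (0:ℝ)..ρ, f r) := by
      apply hsup_le (by linarith [hρ.1])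
      intro s hs
      rcases le_or_gt s 0 with hs0 | hs0
      · have h1 : ‖ev h x s‖ ≤ M₁ := by
          have h2 : ev h x s = (seg h x 0) ⟨s, ⟨hs.1, hs0⟩⟩ := by simp [ev, seg]
          rw [h2]
          exact le_trans (ContinuousMap.norm_coe_le_norm _ _) hx0
        have h3 : ‖ev h x s‖ ^ 2
            ≤ 3 * M₁ ^ 2 + (3 * κ₂ * (T + 2 * M + 1)) * ∫ r in (0:ℝ)..ρ, f r := by
          nlinarith [norm_nonneg (ev h x s), mul_nonneg hCcnn hGnn]
        calc ‖ev h x s‖ = Real.sqrt (‖ev h x s‖ ^ 2) := (Real.sqrt_sq (norm_nonneg _)).symm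
          _ ≤ _ := Real.sqrt_le_sqrt h3
      · have h1 := est s hs0.le (le_trans hs.2 hρ.2)
        have h2 : (∫ r in (0:ℝ)..s, f r) ≤ ∫ r in (0:ℝ)..ρ, f r :=
          intervalIntegral.integral_mono_interval le_rfl hs0.le hs.2
            (Filter.Eventually.of_forall fun r => hf0 r) (hf_ii le_rfl hρ.1)
        have h3 : ‖ev h x s‖ ^ 2
            ≤ 3 * M₁ ^ 2 + (3 * κ₂ * (T + 2 * M + 1)) * ∫ r in (0:ℝ)..ρ, f r := by
          nlinarith
        calc ‖ev h x s‖ = Real.sqrt (‖ev h x s‖ ^ 2) := (Real.sqrt_sq (norm_nonneg _)).symm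
          _ ≤ _ := Real.sqrt_le_sqrt h3
    have hsq : supNormOn h x ρ ^ 2
        ≤ 3 * M₁ ^ 2 + (3 * κ₂ * (T + 2 * M + 1)) * ∫ r in (0:ℝ)..ρ, f r := by
      have h2 := pow_le_pow_left₀ (hsup_nonneg ρ (by linarith [hρ.1])) hsupb 2
      rwa [Real.sq_sqrt hR] at h2
    simp only [hf_def]
    linarith
  -- Gronwall
  have hCc : (0:ℝ) < 3 * κ₂ * (T + 2 * M + 1) := by nlinarith
  have hg_nonneg : ∀ ρ : ℝ, 0 ≤ ρ → 0 ≤ ∫ r in (0:ℝ)..ρ, f r :=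
    fun ρ hρ => intervalIntegral.integral_nonneg hρ fun r _ => hf0 r
  have hg_cont : ContinuousOn (fun ρ => ∫ r in (0:ℝ)..ρ, f r) (Icc 0 T) := by
    have h1 : IntegrableOn f (uIcc (0:ℝ) T) volume := by
      rw [uIcc_of_le hT0]
      exact (hf_contOn.mono fun r hr => hr.1).integrableOn_compact isCompact_Icc
    have h2 := intervalIntegral.continuousOn_primitive_interval h1
    rwa [uIcc_of_le hT0] at h2
  have hg_deriv : ∀ ρ ∈ Ico (0:ℝ) T,
      HasDerivWithinAt (fun ρ => ∫ r in (0:ℝ)..ρ, f r) (f ρ) (Ici ρ) ρ := by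
    intro ρ hρ
    apply intervalIntegral.integral_hasDerivWithinAt_right (t := Ioi ρ)
      (hf_ii le_rfl hρ.1)
    · exact ⟨Ici 0, Filter.mem_of_superset self_mem_nhdsWithin
        (fun y hy => le_of_lt (lt_of_le_of_lt hρ.1 hy)),
        hf_contOn.aestronglyMeasurable measurableSet_Ici⟩
    · exact (hf_contOn ρ hρ.1).mono (fun y hy => le_of_lt (lt_of_le_of_lt hρ.1 hy))
  have hgron := norm_le_gronwallBound_of_norm_deriv_right_le
    (f := fun ρ => ∫ r in (0:ℝ)..ρ, f r) (f' := f) (δ := 0)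
    (K := 3 * κ₂ * (T + 2 * M + 1)) (ε := 1 + 3 * M₁ ^ 2) (a := 0) (b := T)
    hg_cont hg_deriv
    (by show ‖∫ r in (0:ℝ)..(0:ℝ), f r‖ ≤ 0
        rw [intervalIntegral.integral_same, norm_zero])
    (fun ρ hρ => by
      rw [Real.norm_of_nonneg (hf0 ρ), Real.norm_of_nonneg (hg_nonneg ρ hρ.1)]
      linarith [hfle ρ (Ico_subset_Icc_self hρ)])
    T (right_mem_Icc.mpr hT0)
  have hgT : (∫ r in (0:ℝ)..T, f r) ≤ (1 + 3 * M₁ ^ 2) / (3 * κ₂ * (T + 2 * M + 1))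
      * (Real.exp (3 * κ₂ * (T + 2 * M + 1) * T) - 1) := by
    rw [Real.norm_of_nonneg (hg_nonneg T hT0), gronwallBound_of_K_ne_0 hCc.ne'] at hgron
    simpa using hgron
  have hfT : f T ≤ (1 + 3 * M₁ ^ 2) * Real.exp (3 * κ₂ * (T + 2 * M + 1) * T) := by
    have h1 := hfle T (right_mem_Icc.mpr hT0)
    have h2 : (1 + 3 * M₁ ^ 2) + (3 * κ₂ * (T + 2 * M + 1)) *
        ((1 + 3 * M₁ ^ 2) / (3 * κ₂ * (T + 2 * M + 1))
          * (Real.exp (3 * κ₂ * (T + 2 * M + 1) * T) - 1))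
        = (1 + 3 * M₁ ^ 2) * Real.exp (3 * κ₂ * (T + 2 * M + 1) * T) := by
      field_simp
      ring
    have h3 := mul_le_mul_of_nonneg_left hgT hCc.le
    linarith
  have hM₂' : (1 + 3 * M₁ ^ 2) * Real.exp (3 * κ₂ * (T + 2 * M + 1) * T) = M₂ := by
    rw [hM₂, show 3 * T * κ₂ * (T + 2 * M + 1) = 3 * κ₂ * (T + 2 * M + 1) * T from by ring]
  have hfTM₂ : f T ≤ M₂ := hM₂' ▸ hfT
  have hM₂pos : (1:ℝ) ≤ M₂ := le_trans (hf1 T) hfTM₂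
  constructor
  · have hfeq : f T = 1 + supNormOn h x T ^ 2 := by rw [hf_def]
    linarith
  · intro s t hs hst ht
    have hst' := hst.le
    have hdiff : ev h x t - ev h x s = (∫ r in s..t, b (seg h x r))
        + ∫ r in s..t, matVec (σ' (seg h x r)) (u r) := by
      have e1 := hueq t ⟨le_trans hs hst', ht⟩
      have e2 := hueq s ⟨hs, le_trans hst' ht⟩
      have a1 := intervalIntegral.integral_add_adjacent_intervals (hb_ii 0 s) (hb_ii s t)
      have a2 := intervalIntegral.integral_add_adjacent_intervals
        (hmv_ii le_rfl hs (le_trans hst' ht)) (hmv_ii hs hst' ht)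
      rw [e1, e2, ← a1, ← a2]
      abel
    have hfr : ∀ r ∈ Icc s t, f r ≤ M₂ :=
      fun r hr => le_trans (hf_mono (le_trans hs hr.1) (le_trans hr.2 ht)) hfTM₂
    have hG : (∫ r in s..t, f r) ≤ (t - s) * M₂ := by
      have h1 : (∫ r in s..t, f r) ≤ ∫ r in s..t, M₂ :=
        intervalIntegral.integral_mono_on hst' (hf_ii hs (le_trans hs hst'))
          intervalIntegrable_const hfr
      simpa using h1
    have hGnn : 0 ≤ ∫ r in s..t, f r :=
      intervalIntegral.integral_nonneg hst' fun r _ => hf0 r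
    have hBn : ‖∫ r in s..t, b (seg h x r)‖ ≤ ∫ r in s..t, ‖b (seg h x r)‖ :=
      intervalIntegral.norm_integral_le_integral_norm hst'
    have hSn : ‖∫ r in s..t, matVec (σ' (seg h x r)) (u r)‖
        ≤ ∫ r in s..t, frobNorm (σ' (seg h x r)) * ‖u r‖ :=
      le_trans (intervalIntegral.norm_integral_le_integral_norm hst')
        (intervalIntegral.integral_mono_on hst' ((hmv_ii hs hst' ht).norm)
          (hφu_ii hs hst' ht) fun r _ => norm_matVec_le' _ _)
    have htri : ‖ev h x t - ev h x s‖ ≤ (∫ r in s..t, ‖b (seg h x r)‖)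
        + ∫ r in s..t, frobNorm (σ' (seg h x r)) * ‖u r‖ := by
      rw [hdiff]
      exact le_trans (norm_add_le _ _) (add_le_add hBn hSn)
    have hBnn : 0 ≤ ∫ r in s..t, ‖b (seg h x r)‖ :=
      intervalIntegral.integral_nonneg hst' fun r _ => norm_nonneg _
    have hSnn : 0 ≤ ∫ r in s..t, frobNorm (σ' (seg h x r)) * ‖u r‖ :=
      intervalIntegral.integral_nonneg hst' fun r _ =>
        mul_nonneg (frobNorm_nonneg' _) (norm_nonneg _)
    have hB2 := hB hs hst' ht
    have hS2 := hS hs hst' ht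
    have hsq : ‖ev h x t - ev h x s‖ ^ 2 ≤ ((∫ r in s..t, ‖b (seg h x r)‖)
        + ∫ r in s..t, frobNorm (σ' (seg h x r)) * ‖u r‖) ^ 2 :=
      pow_le_pow_left₀ (norm_nonneg _) htri 2
    have habs : |t - s| = t - s := abs_of_pos (by linarith)
    rw [habs, hM₃]
    have hp1 : (0:ℝ) ≤ (T - (t - s)) * (κ₂ * ∫ r in s..t, f r) :=
      mul_nonneg (by linarith) (mul_nonneg hκ₂.le hGnn)
    have hp2 : (0:ℝ) ≤ (2 * κ₂ * (T + 2 * M + 1)) * ((t - s) * M₂ - ∫ r in s..t, f r) :=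
      mul_nonneg (by nlinarith) (by linarith)
    nlinarith [hsq, hB2, hS2, hp1, hp2,
      sq_nonneg ((∫ r in s..t, ‖b (seg h x r)‖)
        - ∫ r in s..t, frobNorm (σ' (seg h x r)) * ‖u r‖)]
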